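/- Let (X,d,μ) be a complete metric measure space where μ is a doubling Borel measure and X satisfies an annular decay property, and let w be a weight on X. Then the following are equivalent: (i) w ∈ RH_∞(X); (ii) w^{s_0} ∈ RH_∞(X) for some s_0 > 0; (iii) w^s ∈ RH_∞(X) for all s > 0. -/

import Mathlib

open MeasureTheory Metric Filter

noncomputable section

namespace Paper

variable {X : Type*} [MetricSpace X] [MeasurableSpace X]

/-- The measure `μ` is doubling with constant `Cd`: every ball has positive finite measure and
doubling the radius increases the measure by at most the factor `Cd`. -/
def IsDoubling (μ : Measure X) (Cd : ℝ) : Prop :=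
  1 < Cd ∧ ∀ (x : X) (r : ℝ), 0 < r →
    0 < μ (ball x r) ∧ μ (ball x r) < ⊤ ∧
    μ (ball x (2 * r)) ≤ ENNReal.ofReal Cd * μ (ball x r)

/-- `X` (with measure `μ`) satisfies the `α`-annular decay property for some `0 ≤ α ≤ 1`. -/
def AnnularDecay (μ : Measure X) : Prop :=
  ∃ α C : ℝ, 0 ≤ α ∧ α ≤ 1 ∧ 1 ≤ C ∧
    ∀ (x : X) (r δ : ℝ), 0 < r → 0 < δ → δ < 1 →
      μ (ball x r \ ball x ((1 - δ) * r)) ≤ ENNReal.ofReal (C * δ ^ α) * μ (ball x r)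

/-- A weight: a nonnegative locally integrable function. -/
def IsWeight (μ : Measure X) (w : X → ℝ) : Prop :=
  (∀ x, 0 ≤ w x) ∧ LocallyIntegrable w μ

/-- The integral average of `f` over the ball `B(x, r)`. -/
def avg (μ : Measure X) (f : X → ℝ) (x : X) (r : ℝ) : ℝ :=
  ⨍ y in ball x r, f y ∂μ

/-- Essential infimum of `f` over the ball `B(x, r)`. -/
def einf (μ : Measure X) (f : X → ℝ) (x : X) (r : ℝ) : ℝ :=
  essInf f (μ.restrict (ball x r))

/-- Essential supremum of `f` over the ball `B(x, r)`. -/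
def esup (μ : Measure X) (f : X → ℝ) (x : X) (r : ℝ) : ℝ :=
  essSup f (μ.restrict (ball x r))

/-- The set of admissible `A₁` constants for `w`. -/
def A1Set (μ : Measure X) (w : X → ℝ) : Set ℝ :=
  {c | 0 ≤ c ∧ ∀ (x : X) (r : ℝ), 0 < r → avg μ w x r ≤ c * einf μ w x r}

/-- `w ∈ A₁(X)`. -/
def MemA1 (μ : Measure X) (w : X → ℝ) : Prop :=
  (A1Set μ w).Nonempty

/-- The `A₁` constant `[w]_{A₁}` (the least admissible constant). -/
def A1Const (μ : Measure X) (w : X → ℝ) : ℝ :=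
  sInf (A1Set μ w)

/-- The `A_p` products over balls, for `1 < p < ∞`. -/
def ApRatios (μ : Measure X) (w : X → ℝ) (p : ℝ) : Set ℝ :=
  {t | ∃ (x : X) (r : ℝ), 0 < r ∧
    t = avg μ w x r * (avg μ (fun y => w y ^ (-(1 / (p - 1)))) x r) ^ (p - 1)}

/-- `w ∈ A_p(X)` for `1 < p < ∞`. -/
def MemAp (μ : Measure X) (w : X → ℝ) (p : ℝ) : Prop :=
  BddAbove (ApRatios μ w p)

/-- The `A_∞` (reverse Jensen) ratios over balls. -/
def AinftyRatios (μ : Measure X) (w : X → ℝ) : Set ℝ :=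
  {t | ∃ (x : X) (r : ℝ), 0 < r ∧
    t = avg μ w x r * Real.exp (-(avg μ (fun y => Real.log (w y)) x r))}

/-- `w ∈ A_∞(X)`. -/
def MemAinfty (μ : Measure X) (w : X → ℝ) : Prop :=
  BddAbove (AinftyRatios μ w)

/-- The `A_∞` constant `[w]_{A_∞}`. -/
def AinftyConst (μ : Measure X) (w : X → ℝ) : ℝ :=
  sSup (AinftyRatios μ w)

/-- `w ∈ RH_s(X)` for `1 < s < ∞`: the reverse Hölder inequality holds with some constant. -/
def MemRH (μ : Measure X) (w : X → ℝ) (s : ℝ) : Prop :=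
  ∃ C : ℝ, ∀ (x : X) (r : ℝ), 0 < r →
    (avg μ (fun y => w y ^ s) x r) ^ (1 / s) ≤ C * avg μ w x r

/-- The set of admissible `RH_∞` constants for `w`. -/
def RHinftySet (μ : Measure X) (w : X → ℝ) : Set ℝ :=
  {C | ∀ (x : X) (r : ℝ), 0 < r → esup μ w x r ≤ C * avg μ w x r}

/-- `w ∈ RH_∞(X)`. -/
def MemRHinfty (μ : Measure X) (w : X → ℝ) : Prop :=
  (RHinftySet μ w).Nonempty

/-- The infimal constant in the `RH_∞` condition for `w`. -/
def RHinftyConst (μ : Measure X) (w : X → ℝ) : ℝ :=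
  sInf (RHinftySet μ w)

/-- The `BMO` mean oscillations of `f` over balls. -/
def bmoRatios (μ : Measure X) (f : X → ℝ) : Set ℝ :=
  {t | ∃ (x : X) (r : ℝ), 0 < r ∧ t = avg μ (fun y => |f y - avg μ f x r|) x r}

/-- `f ∈ BMO(X)`. -/
def MemBMO (μ : Measure X) (f : X → ℝ) : Prop :=
  LocallyIntegrable f μ ∧ BddAbove (bmoRatios μ f)

/-- `‖f‖_{BMO}`. -/
def bmoNorm (μ : Measure X) (f : X → ℝ) : ℝ :=
  sSup (bmoRatios μ f)

/-- The lower oscillations of `f` over balls. -/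
def bloRatios (μ : Measure X) (f : X → ℝ) : Set ℝ :=
  {t | ∃ (x : X) (r : ℝ), 0 < r ∧ t = avg μ f x r - einf μ f x r}

/-- `f ∈ BLO(X)` (bounded lower oscillation). -/
def MemBLO (μ : Measure X) (f : X → ℝ) : Prop :=
  LocallyIntegrable f μ ∧ BddAbove (bloRatios μ f)

/-- `‖f‖_{BLO}`. -/
def bloNorm (μ : Measure X) (f : X → ℝ) : ℝ :=
  sSup (bloRatios μ f)

/-- The upper oscillations of `f` over balls. -/
def buoRatios (μ : Measure X) (f : X → ℝ) : Set ℝ :=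
  {t | ∃ (x : X) (r : ℝ), 0 < r ∧ t = esup μ f x r - avg μ f x r}

/-- `f ∈ BUO(X)` (bounded upper oscillation). -/
def MemBUO (μ : Measure X) (f : X → ℝ) : Prop :=
  LocallyIntegrable f μ ∧ BddAbove (buoRatios μ f)

/-- `‖f‖_{BUO}`. -/
def buoNorm (μ : Measure X) (f : X → ℝ) : ℝ :=
  sSup (buoRatios μ f)

/-- The natural maximal function `M^♮ f`. -/
def natMax (μ : Measure X) (f : X → ℝ) (x : X) : ℝ :=
  sSup {t | ∃ (z : X) (r : ℝ), 0 < r ∧ x ∈ ball z r ∧ t = avg μ f z r}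

/-- The natural minimal function `m^♮ f`. -/
def natMin (μ : Measure X) (f : X → ℝ) (x : X) : ℝ :=
  sInf {t | ∃ (z : X) (r : ℝ), 0 < r ∧ x ∈ ball z r ∧ t = avg μ f z r}

/-- The Hardy–Littlewood maximal function `M f`. -/
def maxFn (μ : Measure X) (f : X → ℝ) (x : X) : ℝ :=
  natMax μ (fun y => |f y|) x

/-- The (Cruz-Uribe–Neugebauer) minimal function `m f`. -/
def minFn (μ : Measure X) (f : X → ℝ) (x : X) : ℝ :=
  natMin μ (fun y => |f y|) x

/-- `f ∈ L^∞_loc(X)`: essentially bounded on every compact subset. -/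
def LinftyLoc (μ : Measure X) (f : X → ℝ) : Prop :=
  ∀ K : Set X, IsCompact K → ∃ c : ℝ, ∀ᵐ x ∂(μ.restrict K), |f x| ≤ c

/-- `f ∈ L^∞(X)`. -/
def MemLinfty (μ : Measure X) (f : X → ℝ) : Prop :=
  ∃ c : ℝ, ∀ᵐ x ∂μ, |f x| ≤ c

/-- `‖f‖_{L^∞}`. -/
def linftyNorm (μ : Measure X) (f : X → ℝ) : ℝ :=
  essSup (fun x => |f x|) μ

end Paper

open Paper

theorem aux_rhinfty_rpow {X : Type*} [MetricSpace X] [MeasurableSpace X] (μ : MeasureTheory.Measure X)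
    (hball : ∀ (x : X) (r : ℝ), 0 < r → 0 < μ (ball x r) ∧ μ (ball x r) < ⊤)
    (v : X → ℝ) (hv0 : ∀ x, 0 ≤ v x) {s : ℝ} (hs : 0 < s)
    (h : MemRHinfty μ v) : MemRHinfty μ (fun x => v x ^ s) := by
  obtain ⟨C, hC⟩ := h
  set C1 := max C 1 with hC1def
  have hC1 : 1 ≤ C1 := le_max_right _ _
  have hC1pos : 0 < C1 := lt_of_lt_of_le one_pos hC1
  have hCCpos : 0 < 2 ^ (s + 1) * C1 ^ (s + 1) :=
    mul_pos (Real.rpow_pos_of_pos two_pos _) (Real.rpow_pos_of_pos hC1pos _)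
  refine ⟨2 ^ (s + 1) * C1 ^ (s + 1), ?_⟩
  intro x r hr
  obtain ⟨hBpos, hBlt⟩ := hball x r hr
  set B := ball x r with hBdef
  set ν := μ.restrict B with hνdef
  have hνuniv : ν Set.univ = μ B := Measure.restrict_apply_univ B
  have hνne : ν ≠ 0 := by
    intro h0
    rw [h0, Measure.coe_zero, Pi.zero_apply] at hνuniv
    exact hBpos.ne' hνuniv.symm
  have hae : (ae ν).NeBot := ae_neBot.2 hνne
  have hfin : IsFiniteMeasure ν := ⟨by rw [hνuniv]; exact hBlt⟩
  set c := (μ B).toReal with hcdef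
  have hc : 0 < c := ENNReal.toReal_pos hBpos.ne' hBlt.ne
  -- average formulas
  have havg : ∀ f : X → ℝ, avg μ f x r = c⁻¹ * ∫ y, f y ∂ν := by
    intro f
    rw [avg, setAverage_eq, smul_eq_mul]
    rfl
  have havgnn : ∀ f : X → ℝ, (∀ y, 0 ≤ f y) → 0 ≤ avg μ f x r := by
    intro f hf
    rw [havg f]
    exact mul_nonneg (inv_nonneg.2 hc.le) (integral_nonneg hf)
  have hvs0 : ∀ y, 0 ≤ v y ^ s := fun y => Real.rpow_nonneg (hv0 y) s
  set P := avg μ (fun y => v y ^ s) x r with hPdef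
  have hP0 : 0 ≤ P := havgnn _ hvs0
  show esup μ (fun y => v y ^ s) x r ≤ 2 ^ (s + 1) * C1 ^ (s + 1) * P
  by_cases hb : IsBoundedUnder (· ≤ ·) (ae ν) v
  · -- essentially bounded case
    set E := essSup v ν with hEdef
    have hvE : ∀ᵐ y ∂ν, v y ≤ E := ae_le_essSup hb
    set A := avg μ v x r with hAdef
    have hA0 : 0 ≤ A := havgnn v hv0
    have hEC : E ≤ C1 * A := by
      have h1 : esup μ v x r ≤ C * avg μ v x r := hC x r hr
      have : esup μ v x r = E := rfl
      rw [this] at h1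
      calc E ≤ C * A := h1
        _ ≤ C1 * A := mul_le_mul_of_nonneg_right (le_max_left _ _) hA0
    have hE0 : 0 ≤ E := by
      obtain ⟨y, h1, h2⟩ := ((ae_of_all ν hv0).and hvE).exists
      exact h1.trans h2
    rcases eq_or_lt_of_le hA0 with hA0' | hApos
    · -- A = 0 : v = 0 a.e.
      have hE0' : E ≤ 0 := by
        have := hEC
        rw [← hA0', mul_zero] at this
        exact this
      have hv0ae : ∀ᵐ y ∂ν, v y = 0 :=
        (hvE.and (ae_of_all ν hv0)).mono fun y hy => le_antisymm (hy.1.trans hE0') hy.2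
      have hvsae : (fun y => v y ^ s) =ᵐ[ν] fun _ => (0 : ℝ) :=
        hv0ae.mono fun y hy => by
          show v y ^ s = 0
          rw [hy, Real.zero_rpow hs.ne']
      have hes : esup μ (fun y => v y ^ s) x r = 0 :=
        (essSup_congr_ae hvsae).trans (essSup_const 0 hνne)
      rw [hes]
      exact mul_nonneg hCCpos.le hP0
    · -- A > 0
      have hAeq : A = c⁻¹ * ∫ y, v y ∂ν := havg v
      have hint : Integrable v ν := by
        by_contra hni
        rw [integral_undef hni, mul_zero] at hAeq
        exact hApos.ne' hAeq
      have hEA : A ≤ E := by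
        have h1 : ∫ y, v y ∂ν ≤ ∫ _y, E ∂ν := integral_mono_ae hint (integrable_const E) hvE
        rw [integral_const, measureReal_def ν Set.univ, hνuniv, smul_eq_mul] at h1
        rw [hAeq]
        calc c⁻¹ * ∫ y, v y ∂ν ≤ c⁻¹ * (c * E) :=
              mul_le_mul_of_nonneg_left h1 (inv_nonneg.2 hc.le)
          _ = E := by field_simp
      have hEpos : 0 < E := lt_of_lt_of_le hApos hEA
      obtain ⟨g, hgm, hgv⟩ := hint.aemeasurable
      set T := {y | A / 2 ≤ g y} with hTdef
      have hTm : MeasurableSet T := measurableSet_le measurable_const hgm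
      set t := (ν T).toReal with htdef
      have ht0 : 0 ≤ t := ENNReal.toReal_nonneg
      -- Key 1 : (A/2) * c ≤ E * t
      have hub : ∀ᵐ y ∂ν, v y ≤ T.indicator (fun _ => E) y + A / 2 := by
        filter_upwards [hvE, hgv] with y h1 h2
        by_cases hyT : y ∈ T
        · rw [Set.indicator_of_mem hyT]
          linarith
        · rw [Set.indicator_of_notMem hyT]
          have : g y < A / 2 := lt_of_not_ge hyT
          rw [h2]
          linarith
      have hI1 : A * c ≤ E * t + A / 2 * c := by
        have hint2 : Integrable (fun y => T.indicator (fun _ => E) y + A / 2) ν :=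
          ((integrable_const E).indicator hTm).add (integrable_const _)
        have h1 := integral_mono_ae hint hint2 hub
        rw [integral_add ((integrable_const E).indicator hTm) (integrable_const _),
          integral_indicator_const E hTm, integral_const, measureReal_def ν Set.univ, hνuniv, smul_eq_mul,
          smul_eq_mul] at h1
        have h2 : ∫ y, v y ∂ν = A * c := by
          rw [hAeq]; field_simp
        rw [h2] at h1
        calc A * c ≤ (ν T).toReal * E + c * (A / 2) := h1
          _ = E * t + A / 2 * c := by rw [htdef]; ring
      have hKey1 : A / 2 * c ≤ E * t := by linarith
      -- integrability of v ^ s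
      have hgm' : Measurable fun y => if g y = 0 then (0 : ℝ)
          else Real.exp (Real.log (g y) * s) := by
        refine Measurable.ite (hgm (measurableSet_singleton 0)) measurable_const ?_
        exact Real.measurable_exp.comp ((Real.measurable_log.comp hgm).mul_const s)
      have hvsm : AEMeasurable (fun y => v y ^ s) ν := by
        refine ⟨_, hgm', ?_⟩
        filter_upwards [hgv] with y h2
        by_cases hy0 : g y = 0
        · simp only [hy0, if_pos]
          rw [h2, hy0, Real.zero_rpow hs.ne']
        · simp only [hy0, if_neg, if_false]
          have hvpos : 0 < v y := by
            rcases lt_or_eq_of_le (hv0 y) with h | h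
            · exact h
            · exact absurd (h2 ▸ h.symm : g y = 0) hy0
          rw [Real.rpow_def_of_pos hvpos, h2]
      have hvsE : ∀ᵐ y ∂ν, v y ^ s ≤ E ^ s :=
        hvE.mono fun y hy => Real.rpow_le_rpow (hv0 y) hy hs.le
      have hints : Integrable (fun y => v y ^ s) ν := by
        refine Integrable.mono' (integrable_const (E ^ s)) hvsm.aestronglyMeasurable ?_
        filter_upwards [hvsE] with y hy
        rw [Real.norm_eq_abs, abs_of_nonneg (hvs0 y)]
        exact hy
      -- Key 2 : (A/2)^s * t ≤ ∫ v^s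
      set u := (A / 2) ^ s with hudef
      have hu0 : 0 ≤ u := Real.rpow_nonneg (by linarith) s
      have hlb : ∀ᵐ y ∂ν, T.indicator (fun _ => u) y ≤ v y ^ s := by
        filter_upwards [hgv] with y h2
        by_cases hyT : y ∈ T
        · rw [Set.indicator_of_mem hyT]
          have : A / 2 ≤ v y := by rw [h2]; exact hyT
          exact Real.rpow_le_rpow (by linarith) this hs.le
        · rw [Set.indicator_of_notMem hyT]
          exact hvs0 y
      have hI2 : u * t ≤ ∫ y, v y ^ s ∂ν := by
        have h1 := integral_mono_ae ((integrable_const u).indicator hTm) hints hlb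
        rw [integral_indicator_const u hTm, smul_eq_mul] at h1
        calc u * t = (ν T).toReal * u := by rw [htdef]; ring
          _ ≤ _ := h1
      have hPI : P = c⁻¹ * ∫ y, v y ^ s ∂ν := havg _
      -- essSup bound
      have hessle : esup μ (fun y => v y ^ s) x r ≤ E ^ s := by
        have hcob : IsCoboundedUnder (· ≤ ·) (ae ν) fun y => v y ^ s := by
          refine IsBoundedUnder.isCoboundedUnder_le ⟨0, ?_⟩
          rw [eventually_map]
          exact ae_of_all ν hvs0
        exact limsup_le_of_le hcob hvsE
      -- final arithmetic
      have huA : u * A ≤ 2 * E * P := by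
        have h1 : u * (A / 2 * c) ≤ u * (E * t) := mul_le_mul_of_nonneg_left hKey1 hu0
        have h2 : u * (E * t) = E * (u * t) := by ring
        have h3 : E * (u * t) ≤ E * ∫ y, v y ^ s ∂ν := mul_le_mul_of_nonneg_left hI2 hEpos.le
        have h4 : ∫ y, v y ^ s ∂ν = c * P := by rw [hPI]; field_simp
        have h5 : u * (A / 2 * c) ≤ E * (c * P) := by
          rw [← h4]; exact (h1.trans (h2.le)).trans h3
        have h6 : u * A * c ≤ 2 * E * P * c := by nlinarith
        exact le_of_mul_le_mul_right h6 hc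
      have hu2 : u ≤ 2 * C1 * P := by
        have h1 : u * A ≤ 2 * (C1 * A) * P := by nlinarith
        have h2 : u * A ≤ 2 * C1 * P * A := by nlinarith
        exact le_of_mul_le_mul_right h2 hApos
      have hAs : A ^ s = 2 ^ s * u := by
        rw [hudef, ← Real.mul_rpow (by norm_num : (0:ℝ) ≤ 2) (by linarith : (0:ℝ) ≤ A / 2)]
        congr 1
        ring
      have hEs : E ^ s ≤ C1 ^ s * (2 ^ s * u) := by
        rw [← hAs, ← Real.mul_rpow hC1pos.le hA0]
        exact Real.rpow_le_rpow hE0 hEC hs.le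
      have h2s : (2 : ℝ) ^ (s + 1) = 2 ^ s * 2 := by
        rw [Real.rpow_add two_pos, Real.rpow_one]
      have hC1s : C1 ^ (s + 1) = C1 ^ s * C1 := by
        rw [Real.rpow_add hC1pos, Real.rpow_one]
      have h2spos : (0:ℝ) < 2 ^ s := Real.rpow_pos_of_pos two_pos s
      have hC1spos : (0:ℝ) < C1 ^ s := Real.rpow_pos_of_pos hC1pos s
      calc esup μ (fun y => v y ^ s) x r ≤ E ^ s := hessle
        _ ≤ C1 ^ s * (2 ^ s * u) := hEs
        _ ≤ C1 ^ s * (2 ^ s * (2 * C1 * P)) :=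
              mul_le_mul_of_nonneg_left (mul_le_mul_of_nonneg_left hu2 h2spos.le) hC1spos.le
        _ = 2 ^ (s + 1) * C1 ^ (s + 1) * P := by rw [h2s, hC1s]; ring
  · -- essentially unbounded case : essSup of v^s is junk 0
    have hes : esup μ (fun y => v y ^ s) x r = 0 := by
      have hempty : {a : ℝ | ∀ᶠ y in ae ν, v y ^ s ≤ a} = ∅ := by
        ext a
        simp only [Set.mem_setOf_eq, Set.mem_empty_iff_false, iff_false]
        intro ha
        apply hb
        refine ⟨(max a 0) ^ s⁻¹, ?_⟩
        rw [eventually_map]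
        filter_upwards [ha] with y hy
        have h1 : v y = (v y ^ s) ^ s⁻¹ := (Real.rpow_rpow_inv (hv0 y) hs.ne').symm
        rw [h1]
        exact Real.rpow_le_rpow (hvs0 y) (hy.trans (le_max_left _ _))
          (inv_nonneg.2 hs.le)
      show essSup (fun y => v y ^ s) ν = 0
      rw [essSup, limsup_eq, hempty, Real.sInf_empty]
    rw [hes]
    exact mul_nonneg hCCpos.le hP0


/-- `w ∈ RH_∞` iff `w^{s₀} ∈ RH_∞` for some `s₀ > 0` iff `w^s ∈ RH_∞` for all `s > 0`. -/
theorem RHinfty_pow_equivalences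
    {X : Type*} [MetricSpace X] [CompleteSpace X] [MeasurableSpace X] [BorelSpace X]
    (μ : Measure X) (Cd : ℝ) (hμ : IsDoubling μ Cd) (hX : AnnularDecay μ)
    (w : X → ℝ) (hw : IsWeight μ w) :
    (MemRHinfty μ w ↔ ∃ s₀ : ℝ, 0 < s₀ ∧ MemRHinfty μ (fun x => w x ^ s₀)) ∧
    (MemRHinfty μ w ↔ ∀ s : ℝ, 0 < s → MemRHinfty μ (fun x => w x ^ s)) := by
  have hball : ∀ (x : X) (r : ℝ), 0 < r → 0 < μ (ball x r) ∧ μ (ball x r) < ⊤ :=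
    fun x r hr => ⟨(hμ.2 x r hr).1, (hμ.2 x r hr).2.1⟩
  have key : ∀ s : ℝ, 0 < s → MemRHinfty μ w → MemRHinfty μ (fun x => w x ^ s) :=
    fun s hs h => aux_rhinfty_rpow μ hball w hw.1 hs h
  have back : ∀ s₀ : ℝ, 0 < s₀ → MemRHinfty μ (fun x => w x ^ s₀) → MemRHinfty μ w := by
    intro s₀ hs₀ h
    have h2 := aux_rhinfty_rpow μ hball (fun x => w x ^ s₀)
      (fun x => Real.rpow_nonneg (hw.1 x) s₀) (inv_pos.2 hs₀) h
    have heq : (fun x => (w x ^ s₀) ^ s₀⁻¹) = w :=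
      funext fun x => Real.rpow_rpow_inv (hw.1 x) hs₀.ne'
    rwa [heq] at h2
  have hone : (fun x => w x ^ (1 : ℝ)) = w := funext fun x => Real.rpow_one _
  constructor
  · constructor
    · intro h
      exact ⟨1, one_pos, by rwa [hone]⟩
    · rintro ⟨s₀, hs₀, h⟩
      exact back s₀ hs₀ h
  · constructor
    · intro h s hs
      exact key s hs h
    · intro h
      have h1 := h 1 one_pos
      rwa [hone] at h1
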